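/- arXiv:0807.2423 — 3 statements merged into one kernel-verified Lean document; each statement's English description precedes it below -/
import Mathlib

section
/- For the explicit infinite matrices X₀, X₁, X₂ of the given representation, the following algebraic relations hold: X₁X₀ = X₁ + X₀, X₁X₂ = X₂, X₂X₀ = X₂, and moreover X₂ = X₁X₀ − X₀X₁. -/
open scoped BigOperators Classical
open Filter Topology

noncomputable section

namespace TASEP

/-- The matrix `X₀`: ones on the diagonal and the subdiagonal. -/
def X0 : ℕ → ℕ → ℝ := fun i k => if k = i ∨ k + 1 = i then 1 else 0

/-- The matrix `X₁`: ones on the diagonal and the superdiagonal. -/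
def X1 : ℕ → ℕ → ℝ := fun i k => if k = i ∨ k = i + 1 then 1 else 0

/-- The matrix `X₂`: a single one in the `(0,0)` entry. -/
def X2 : ℕ → ℕ → ℝ := fun i k => if i = 0 ∧ k = 0 then 1 else 0

/-- The matrix associated to a species label (`0` = hole, `1` = first class
particle, `2` = second class particle). -/
def Xmat : Fin 3 → ℕ → ℕ → ℝ
  | 0 => X0
  | 1 => X1
  | 2 => X2

/-- Product of two infinite matrices (well defined here since the relevant
matrices have finitely many nonzero entries in each row and column). -/
def mul (A B : ℕ → ℕ → ℝ) : ℕ → ℕ → ℝ := fun i k => ∑' j, A i j * B j k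

/-- The row vector `⟨W_α|`, with `i`-th entry `((1-α)/α)^i`. -/
def W (α : ℝ) : ℕ → ℝ := fun i => ((1 - α) / α) ^ i

/-- The column vector `|V_β⟩`, with `i`-th entry `((1-β)/β)^i`. -/
def V (β : ℝ) : ℕ → ℝ := fun i => ((1 - β) / β) ^ i

/-- Row vector times matrix. -/
def rowMul (v : ℕ → ℝ) (A : ℕ → ℕ → ℝ) : ℕ → ℝ := fun k => ∑' i, v i * A i k

/-- Matrix times column vector. -/
def colMul (A : ℕ → ℕ → ℝ) (v : ℕ → ℝ) : ℕ → ℝ := fun i => ∑' k, A i k * v k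

/-- Row vector times a word of matrices. -/
def rowWord (v : ℕ → ℝ) : List (Fin 3) → ℕ → ℝ
  | [] => v
  | a :: rest => rowWord (rowMul v (Xmat a)) rest

/-- Matrix element `⟨v| X_{σ₁} ⋯ X_{σ_p} |w⟩` of a word of matrices. -/
def pairing (v : ℕ → ℝ) (word : List (Fin 3)) (w : ℕ → ℝ) : ℝ :=
  ∑' i, rowWord v word i * w i

/-- Weight `w^{α,β}(τ) = ⟨W_α| X_{τ₁} ⋯ X_{τ_L} |V_β⟩` of a configuration. -/
def wt (α β : ℝ) {L : ℕ} (τ : Fin L → Fin 3) : ℝ :=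
  pairing (W α) (List.ofFn τ) (V β)

/-- Number of second class particles in a configuration. -/
def numTwos {L : ℕ} (τ : Fin L → Fin 3) : ℕ :=
  (Finset.univ.filter fun i => τ i = 2).card

/-- `Y L n`: configurations of length `L` with exactly `n` second class particles. -/
def Y (L n : ℕ) : Finset (Fin L → Fin 3) :=
  Finset.univ.filter fun τ => numTwos τ = n

/-- The partition function `Z^{α,β}(L,n)`. -/
def Z (α β : ℝ) (L n : ℕ) : ℝ := ∑ τ ∈ Y L n, wt α β τ

/-- Value of a configuration at the 1-based site `s` (defaulting to `0` off the lattice). -/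
def val {L : ℕ} (τ : Fin L → Fin 3) (s : ℕ) : Fin 3 :=
  if h : 1 ≤ s ∧ s ≤ L then τ ⟨s - 1, by omega⟩ else 0

/-- `E α β L n r sites j` is `E_r(L,n;i₁,…,i_r;j)`: the sum of weights of
configurations in `Y L n` with a first class particle at each of the sites
`i₁,…,i_{r-1}` and a block of `j` consecutive first class particles starting
at site `i_r`. -/
def E (α β : ℝ) (L n r : ℕ) (sites : Fin r → ℕ) (j : ℕ) : ℝ :=
  ∑ τ ∈ (Y L n).filter (fun τ =>
      (∀ m : Fin r, (m : ℕ) + 1 ≠ r → val τ (sites m) = 1) ∧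
      (∀ m : Fin r, (m : ℕ) + 1 = r → ∀ t ∈ Finset.range j, val τ (sites m + t) = 1)),
    wt α β τ

end TASEP

namespace TASEP

lemma mul_X1_left (B : ℕ → ℕ → ℝ) (i k : ℕ) :
    mul X1 B i k = B i k + B (i + 1) k := by
  have h : ∑' j, X1 i j * B j k = ∑ j ∈ ({i, i + 1} : Finset ℕ), X1 i j * B j k := by
    refine tsum_eq_sum ?_
    intro j hj
    simp only [Finset.mem_insert, Finset.mem_singleton, not_or] at hj
    simp [X1, hj.1, hj.2]
  rw [mul, h, Finset.sum_insert (by simp), Finset.sum_singleton]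
  simp [X1]

lemma mul_X2_left (B : ℕ → ℕ → ℝ) (i k : ℕ) :
    mul X2 B i k = (if i = 0 then 1 else 0) * B 0 k := by
  have h : ∑' j, X2 i j * B j k = X2 i 0 * B 0 k := by
    refine tsum_eq_single 0 ?_
    intro j hj
    simp [X2, hj]
  rw [mul, h]
  simp [X2]

lemma mul_X0_left (B : ℕ → ℕ → ℝ) (i k : ℕ) :
    mul X0 B i k = B i k + (if 1 ≤ i then B (i - 1) k else 0) := by
  have h : ∑' j, X0 i j * B j k = ∑ j ∈ ({i - 1, i} : Finset ℕ), X0 i j * B j k := by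
    refine tsum_eq_sum ?_
    intro j hj
    simp only [Finset.mem_insert, Finset.mem_singleton, not_or] at hj
    have : ¬ (j = i ∨ j + 1 = i) := by omega
    simp [X0, this]
  rw [mul, h]
  rcases Nat.eq_zero_or_pos i with hi | hi
  · subst hi
    simp [X0]
  · rw [Finset.sum_insert (by simp; omega), Finset.sum_singleton]
    have h1 : X0 i (i - 1) = 1 := by simp [X0]; omega
    have h2 : X0 i i = 1 := by simp [X0]
    rw [h1, h2, if_pos (show 1 ≤ i from hi)]
    ring

/-- the algebraic relations `X₁X₀ = X₁ + X₀`, `X₁X₂ = X₂`,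
`X₂X₀ = X₂`, and `X₂ = X₁X₀ − X₀X₁` for the explicit infinite matrices. -/
theorem matrix_algebra_relations :
    (mul X1 X0 = fun i k => X1 i k + X0 i k) ∧
    (mul X1 X2 = X2) ∧
    (mul X2 X0 = X2) ∧
    (X2 = fun i k => mul X1 X0 i k - mul X0 X1 i k) := by
  have h10 : mul X1 X0 = fun i k => X1 i k + X0 i k := by
    funext i k
    rw [mul_X1_left]
    simp only [X0, X1]
    split_ifs <;> (try norm_num) <;> (try omega) <;> tauto
  have h12 : mul X1 X2 = X2 := by
    funext i k
    rw [mul_X1_left]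
    simp only [X2]
    split_ifs <;> (try norm_num) <;> (try omega) <;> tauto
  have h20 : mul X2 X0 = X2 := by
    funext i k
    rw [mul_X2_left]
    simp only [X0, X2]
    split_ifs <;> (try norm_num) <;> (try omega) <;> tauto
  refine ⟨h10, h12, h20, ?_⟩
  funext i k
  rw [h10, mul_X0_left]
  simp only [X0, X1, X2]
  split_ifs <;> (try norm_num) <;> (try omega) <;> tauto

end TASEP
end
end

section
/- For all α, β ∈ (0,1], the explicit row vector ⟨W_α| and column vector |V_β⟩ satisfy: ⟨W_α|X₀ = (1/α)⟨W_α|, X₁|V_β⟩ = (1/β)|V_β⟩, X₂|V_β⟩ = |V₁⟩, ⟨W_α|X₂ = ⟨W₁|, and ⟨W_α|V₁⟩ = ⟨W₁|V_β⟩ = 1, where ⟨W₁| and |V₁⟩ are the α = 1 and β = 1 instances (both equal to the coordinate vector e₀). -/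
open scoped BigOperators Classical
open Filter Topology

noncomputable section

namespace TASEP

/-- boundary vector relations: `⟨W_α|X₀ = (1/α)⟨W_α|`,
`X₁|V_β⟩ = (1/β)|V_β⟩`, `X₂|V_β⟩ = |V₁⟩`, `⟨W_α|X₂ = ⟨W₁|`, and
`⟨W_α|V₁⟩ = ⟨W₁|V_β⟩ = 1`, for all `α, β ∈ (0,1]`. -/
theorem boundary_vector_relations (α β : ℝ)
    (hα : α ∈ Set.Ioc (0 : ℝ) 1) (hβ : β ∈ Set.Ioc (0 : ℝ) 1) :
    (rowMul (W α) X0 = fun k => (1 / α) * W α k) ∧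
    (colMul X1 (V β) = fun i => (1 / β) * V β i) ∧
    (colMul X2 (V β) = V 1) ∧
    (rowMul (W α) X2 = W 1) ∧
    (∑' i, W α i * V 1 i) = 1 ∧
    (∑' i, W 1 i * V β i) = 1 := by
  obtain ⟨hα0, hα1⟩ := hα
  obtain ⟨hβ0, hβ1⟩ := hβ
  have hαne : α ≠ 0 := ne_of_gt hα0
  have hβne : β ≠ 0 := ne_of_gt hβ0
  refine ⟨?_, ?_, ?_, ?_, ?_, ?_⟩
  · funext k
    have h1 : ∑' i, W α i * X0 i k = ∑ i ∈ ({k, k+1} : Finset ℕ), W α i * X0 i k := by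
      apply tsum_eq_sum
      intro i hi
      simp only [Finset.mem_insert, Finset.mem_singleton] at hi
      push_neg at hi
      have hx : ¬(k = i ∨ k + 1 = i) := by omega
      have : X0 i k = 0 := by simp [X0, hx]
      simp [this]
    show ∑' i, W α i * X0 i k = (1 / α) * W α k
    rw [h1, Finset.sum_pair (by omega : k ≠ k + 1)]
    have e1 : X0 k k = 1 := by simp [X0]
    have e2 : X0 (k+1) k = 1 := by simp [X0]
    rw [e1, e2]
    simp only [W, mul_one, pow_succ]
    field_simp
    ring
  · funext i
    have h1 : ∑' k, X1 i k * V β k = ∑ k ∈ ({i, i+1} : Finset ℕ), X1 i k * V β k := by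
      apply tsum_eq_sum
      intro k hk
      simp only [Finset.mem_insert, Finset.mem_singleton] at hk
      push_neg at hk
      have hx : ¬(k = i ∨ k = i + 1) := by omega
      have : X1 i k = 0 := by simp [X1, hx]
      simp [this]
    show ∑' k, X1 i k * V β k = (1 / β) * V β i
    rw [h1, Finset.sum_pair (by omega : i ≠ i + 1)]
    have e1 : X1 i i = 1 := by simp [X1]
    have e2 : X1 i (i+1) = 1 := by simp [X1]
    rw [e1, e2]
    simp only [V, one_mul, pow_succ]
    field_simp
    ring
  · funext i
    show ∑' k, X2 i k * V β k = V 1 i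
    rcases Nat.eq_zero_or_pos i with hi | hi
    · subst hi
      rw [tsum_eq_single 0 (by intro k hk; simp [X2, hk])]
      simp [X2, V]
    · rw [tsum_eq_single 0 (by intro k hk; simp [X2, hk])]
      have : X2 i 0 = 0 := by simp [X2]; omega
      simp [this, V, zero_pow (by omega : i ≠ 0)]
  · funext k
    show ∑' i, W α i * X2 i k = W 1 k
    rcases Nat.eq_zero_or_pos k with hk | hk
    · subst hk
      rw [tsum_eq_single 0 (by intro i hi; simp [X2, hi])]
      simp [X2, W]
    · rw [tsum_eq_single 0 (by intro i hi; simp [X2, hi])]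
      have : X2 0 k = 0 := by simp [X2]; omega
      simp [this, W, zero_pow (by omega : k ≠ 0)]
  · rw [tsum_eq_single 0 (by
      intro i hi
      simp [V, zero_pow hi])]
    simp [W, V]
  · rw [tsum_eq_single 0 (by
      intro i hi
      simp [W, zero_pow hi])]
    simp [W, V]


end TASEP
end
end

section
/- Let 0 < n < L, let m ≥ 1, let 1 ≤ j₁ < j₂ < ⋯ < j_m ≤ n, and let 1 ≤ q₁ < q₂ < ⋯ < q_m ≤ L. Then the sum of the weights w^{α,β}(τ) over all τ ∈ Y_{L,n} such that, for each i = 1,…,m, the j_i-th entry equal to 2 (counting from the left) is at position q_i, equals the product Z^{α,1}(q₁−1, j₁−1) · ∏_{i=2}^{m} Z^{1,1}(q_i − q_{i−1} − 1, j_i − j_{i−1} − 1) · Z^{1,β}(L − q_m, n − j_m), where by convention Z^{α,β}(ℓ,k) = 0 if k > ℓ or k < 0. -/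
open scoped BigOperators Classical
open Filter Topology

noncomputable section

namespace TASEP

lemma rowWord_append (v : ℕ → ℝ) (u t : List (Fin 3)) :
    rowWord v (u ++ t) = rowWord (rowWord v u) t := by
  induction u generalizing v with
  | nil => rfl
  | cons a u ih => simpa [rowWord] using ih (rowMul v (Xmat a))

lemma W_one : W 1 = fun k => if k = 0 then (1:ℝ) else 0 := by
  funext k
  cases k with
  | zero => simp [W]
  | succ k => simp [W]

lemma V_one : V 1 = fun k => if k = 0 then (1:ℝ) else 0 := by
  funext k
  cases k with
  | zero => simp [V]
  | succ k => simp [V]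

lemma rowMul_X2 (f : ℕ → ℝ) : rowMul f X2 = fun k => f 0 * W 1 k := by
  funext k
  have : ∀ i : ℕ, i ≠ 0 → f i * X2 i k = 0 := by
    intro i hi; simp [X2, hi]
  unfold rowMul
  rw [tsum_eq_single 0 this]
  simp [X2, W_one]

lemma rowMul_smul (c : ℝ) (f : ℕ → ℝ) (A : ℕ → ℕ → ℝ) :
    rowMul (fun i => c * f i) A = fun k => c * rowMul f A k := by
  funext k
  unfold rowMul
  simp_rw [mul_assoc]
  exact tsum_mul_left

lemma rowWord_smul (c : ℝ) (f : ℕ → ℝ) (t : List (Fin 3)) :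
    rowWord (fun i => c * f i) t = fun i => c * rowWord f t i := by
  induction t generalizing f with
  | nil => rfl
  | cons a t ih =>
      show rowWord (rowMul (fun i => c * f i) (Xmat a)) t = _
      rw [rowMul_smul, ih]
      rfl

lemma pairing_V_one (v : ℕ → ℝ) (u : List (Fin 3)) :
    pairing v u (V 1) = rowWord v u 0 := by
  unfold pairing
  rw [tsum_eq_single 0]
  · simp [V_one]
  · intro i hi; simp [V_one, hi]

lemma pairing_split (v : ℕ → ℝ) (u t : List (Fin 3)) (w : ℕ → ℝ) :
    pairing v (u ++ 2 :: t) w = pairing v u (V 1) * pairing (W 1) t w := by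
  have h2 : rowWord v (u ++ 2 :: t) = fun i => rowWord v u 0 * rowWord (W 1) t i := by
    rw [rowWord_append]
    show rowWord (rowMul (rowWord v u) X2) t = _
    rw [rowMul_X2, rowWord_smul]
  calc pairing v (u ++ 2 :: t) w
      = ∑' i, (rowWord v u 0 * rowWord (W 1) t i) * w i := by rw [pairing, h2]
    _ = rowWord v u 0 * ∑' i, rowWord (W 1) t i * w i := by
        simp_rw [mul_assoc]; exact tsum_mul_left
    _ = _ := by rw [pairing_V_one]; rfl

end TASEP

namespace TASEP

/-- Concatenate a configuration, a single `2`, and another configuration. -/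
def glue {a b : ℕ} (σl : Fin a → Fin 3) (σr : Fin b → Fin 3) : Fin (a+1+b) → Fin 3 :=
  Fin.append (Fin.append σl (fun _ : Fin 1 => 2)) σr

lemma glue_left {a b : ℕ} (σl : Fin a → Fin 3) (σr : Fin b → Fin 3) (t : ℕ) (h : t < a) :
    glue σl σr ⟨t, by omega⟩ = σl ⟨t, h⟩ := by
  have e : (⟨t, by omega⟩ : Fin (a+1+b)) = Fin.castAdd b (Fin.castAdd 1 ⟨t, h⟩) := rfl
  rw [glue, e, Fin.append_left, Fin.append_left]

lemma glue_mid {a b : ℕ} (σl : Fin a → Fin 3) (σr : Fin b → Fin 3) :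
    glue σl σr ⟨a, by omega⟩ = 2 := by
  have e : (⟨a, by omega⟩ : Fin (a+1+b)) = Fin.castAdd b (Fin.natAdd a (0 : Fin 1)) := rfl
  rw [glue, e, Fin.append_left, Fin.append_right]

lemma glue_right {a b : ℕ} (σl : Fin a → Fin 3) (σr : Fin b → Fin 3) (t : ℕ) (h : t < b) :
    glue σl σr ⟨a+1+t, by omega⟩ = σr ⟨t, h⟩ := by
  have e : (⟨a+1+t, by omega⟩ : Fin (a+1+b)) = Fin.natAdd (a+1) ⟨t, h⟩ := rfl
  rw [glue, e, Fin.append_right]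

/-- Number of `2`s among the first `c` sites. -/
def cnt {L : ℕ} (c : ℕ) (τ : Fin L → Fin 3) : ℕ :=
  (Finset.univ.filter fun t : Fin L => (t : ℕ) < c ∧ τ t = 2).card

lemma cnt_eq_sum {L : ℕ} (c : ℕ) (τ : Fin L → Fin 3) :
    cnt c τ = ∑ t : Fin L, if ((t : ℕ) < c ∧ τ t = 2) then 1 else 0 :=
  Finset.card_filter _ _

lemma numTwos_eq_sum {L : ℕ} (τ : Fin L → Fin 3) :
    numTwos τ = ∑ t : Fin L, if τ t = 2 then 1 else 0 :=
  Finset.card_filter _ _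

lemma glue_sum {a b : ℕ} (σl : Fin a → Fin 3) (σr : Fin b → Fin 3) (f : ℕ → Fin 3 → ℕ) :
    ∑ t : Fin (a+1+b), f (t : ℕ) (glue σl σr t)
      = (∑ t : Fin a, f (t : ℕ) (σl t)) + f a 2 + ∑ t : Fin b, f (a+1+(t : ℕ)) (σr t) := by
  rw [Fin.sum_univ_add (f := fun t : Fin ((a+1)+b) => f (t : ℕ) (glue σl σr t))]
  rw [Fin.sum_univ_add (f := fun t : Fin (a+1) => f ((Fin.castAdd b t : Fin (a+1+b)) : ℕ) (glue σl σr (Fin.castAdd b t)))]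
  simp [glue, Fin.append_left, Fin.append_right, add_assoc]

lemma numTwos_glue {a b : ℕ} (σl : Fin a → Fin 3) (σr : Fin b → Fin 3) :
    numTwos (glue σl σr) = numTwos σl + 1 + numTwos σr := by
  rw [numTwos_eq_sum, numTwos_eq_sum (τ := σl), numTwos_eq_sum (τ := σr)]
  have h := glue_sum σl σr (fun _ v => if v = 2 then 1 else 0)
  simp only at h
  rw [h]
  simp

lemma cnt_glue_le {a b : ℕ} (σl : Fin a → Fin 3) (σr : Fin b → Fin 3) (c : ℕ) (hc : c ≤ a) :
    cnt c (glue σl σr) = cnt c σl := by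
  rw [cnt_eq_sum, cnt_eq_sum]
  have h := glue_sum σl σr (fun t v => if (t < c ∧ v = 2) then 1 else 0)
  simp only at h
  have hz : (∑ t : Fin b, if (a + 1 + (t : ℕ) < c ∧ σr t = 2) then 1 else 0) = 0 :=
    Finset.sum_eq_zero (fun t _ => by rw [if_neg]; rintro ⟨h1, -⟩; omega)
  rw [h, if_neg (by rintro ⟨h1, -⟩; omega), hz]
  simp

lemma cnt_glue_top {a b : ℕ} (σl : Fin a → Fin 3) (σr : Fin b → Fin 3) :
    cnt (a+1) (glue σl σr) = numTwos σl + 1 := by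
  rw [cnt_eq_sum, numTwos_eq_sum]
  have h := glue_sum σl σr (fun t v => if (t < a+1 ∧ v = 2) then 1 else 0)
  simp only at h
  have hz : (∑ t : Fin b, if (a + 1 + (t : ℕ) < a + 1 ∧ σr t = 2) then 1 else 0) = 0 :=
    Finset.sum_eq_zero (fun t _ => by rw [if_neg]; rintro ⟨h1, -⟩; omega)
  have hmid : a < a + 1 := by omega
  rw [h, hz, add_zero, if_pos ⟨hmid, trivial⟩]
  congr 1
  apply Finset.sum_congr rfl
  intro t _
  have ht : (t : ℕ) < a + 1 := by omega
  simp [ht]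

lemma val_eq {L : ℕ} (τ : Fin L → Fin 3) (s : ℕ) (h1 : 1 ≤ s) (h2 : s ≤ L) :
    val τ s = τ ⟨s - 1, by omega⟩ := dif_pos ⟨h1, h2⟩

lemma val_glue_left {a b : ℕ} (σl : Fin a → Fin 3) (σr : Fin b → Fin 3) (s : ℕ)
    (h1 : 1 ≤ s) (h2 : s ≤ a) :
    val (glue σl σr) s = val σl s := by
  rw [val_eq _ s h1 (by omega), val_eq _ s h1 h2, glue_left σl σr (s-1) (by omega)]

lemma wt_glue (α β : ℝ) {a b : ℕ} (σl : Fin a → Fin 3) (σr : Fin b → Fin 3) :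
    wt α β (glue σl σr) = wt α 1 σl * wt 1 β σr := by
  have hofn : List.ofFn (glue σl σr) = List.ofFn σl ++ 2 :: List.ofFn σr := by
    rw [glue, List.ofFn_fin_append, List.ofFn_fin_append]
    simp
  rw [wt, hofn, pairing_split]
  rfl

end TASEP

namespace TASEP

def unglueL {a b : ℕ} (τ : Fin (a+1+b) → Fin 3) : Fin a → Fin 3 :=
  fun t => τ ⟨(t : ℕ), by omega⟩

def unglueR {a b : ℕ} (τ : Fin (a+1+b) → Fin 3) : Fin b → Fin 3 :=
  fun t => τ ⟨a+1+(t : ℕ), by omega⟩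

lemma unglueL_glue {a b : ℕ} (σl : Fin a → Fin 3) (σr : Fin b → Fin 3) :
    unglueL (glue σl σr) = σl := by
  funext t
  exact glue_left σl σr t.1 t.2

lemma unglueR_glue {a b : ℕ} (σl : Fin a → Fin 3) (σr : Fin b → Fin 3) :
    unglueR (glue σl σr) = σr := by
  funext t
  exact glue_right σl σr t.1 t.2

lemma glue_unglue {a b : ℕ} (τ : Fin (a+1+b) → Fin 3) (h : τ ⟨a, by omega⟩ = 2) :
    glue (unglueL τ) (unglueR τ) = τ := by
  funext t
  rcases Nat.lt_trichotomy (t : ℕ) a with hlt | heq | hgt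
  · have h1 := glue_left (unglueL τ) (unglueR τ) (t : ℕ) hlt
    have h2 : (⟨(t : ℕ), by omega⟩ : Fin (a+1+b)) = t := Fin.ext rfl
    rw [h2] at h1
    rw [h1]
    exact congrArg τ (Fin.ext rfl)
  · have h2 : (⟨a, by omega⟩ : Fin (a+1+b)) = t := Fin.ext heq.symm
    rw [← h2, glue_mid]
    exact h.symm
  · have hb : (t : ℕ) - (a+1) < b := by omega
    have h1 := glue_right (unglueL τ) (unglueR τ) ((t : ℕ) - (a+1)) hb
    have h2 : (⟨a+1+((t : ℕ)-(a+1)), by omega⟩ : Fin (a+1+b)) = t := by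
      apply Fin.ext
      show a+1+((t : ℕ)-(a+1)) = (t : ℕ)
      omega
    rw [h2] at h1
    rw [h1]
    exact congrArg τ (Fin.ext (show a+1+((t : ℕ)-(a+1)) = (t : ℕ) by omega))

lemma mem_Y {L n : ℕ} (τ : Fin L → Fin 3) : τ ∈ Y L n ↔ numTwos τ = n := by
  simp [Y]

lemma split_sum (α β : ℝ) (a b nl nr : ℕ)
    (ρ : (Fin (a+1+b) → Fin 3) → Prop) (ρ' : (Fin a → Fin 3) → Prop)
    (hcompat : ∀ σl σr, ρ (glue σl σr) ↔ ρ' σl) :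
    ∑ τ ∈ (Y (a+1+b) (nl+1+nr)).filter
        (fun τ => ρ τ ∧ cnt (a+1) τ = nl+1 ∧ τ ⟨a, by omega⟩ = 2), wt α β τ
      = (∑ σ ∈ (Y a nl).filter ρ', wt α 1 σ) * Z 1 β b nr := by
  rw [Z, Finset.sum_mul_sum, ← Finset.sum_product']
  refine Finset.sum_bij' (fun τ _ => (unglueL τ, unglueR τ))
    (fun p _ => glue p.1 p.2) ?_ ?_ ?_ ?_ ?_
  · intro τ hτ
    rw [Finset.mem_filter, mem_Y] at hτ
    obtain ⟨hY, hρ, hcnt, h2⟩ := hτ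
    have hg : glue (unglueL τ) (unglueR τ) = τ := glue_unglue τ h2
    have hnum : numTwos (unglueL τ) + 1 + numTwos (unglueR τ) = nl+1+nr := by
      rw [← numTwos_glue, hg, hY]
    have hct : numTwos (unglueL τ) + 1 = nl + 1 := by
      rw [← cnt_glue_top (unglueL τ) (unglueR τ), hg, hcnt]
    refine Finset.mem_product.mpr ⟨Finset.mem_filter.mpr ⟨(mem_Y (unglueL τ)).mpr (by omega), ?_⟩,
      (mem_Y (unglueR τ)).mpr (by omega)⟩
    rw [← hcompat (unglueL τ) (unglueR τ), hg]
    exact hρ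
  · intro p hp
    rw [Finset.mem_product] at hp
    obtain ⟨hp1, hp2⟩ := hp
    rw [Finset.mem_filter, mem_Y] at hp1
    rw [mem_Y] at hp2
    obtain ⟨h1, h2⟩ := hp1
    have h3 := hp2
    rw [Finset.mem_filter, mem_Y]
    refine ⟨by rw [numTwos_glue, h1, h3], ?_, ?_, glue_mid p.1 p.2⟩
    · rw [hcompat]; exact h2
    · rw [cnt_glue_top, h1]
  · intro τ hτ
    rw [Finset.mem_filter] at hτ
    exact glue_unglue τ hτ.2.2.2
  · intro p hp
    exact Prod.ext (unglueL_glue p.1 p.2) (unglueR_glue p.1 p.2)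
  · intro τ hτ
    rw [Finset.mem_filter] at hτ
    have hg : glue (unglueL τ) (unglueR τ) = τ := glue_unglue τ hτ.2.2.2
    calc wt α β τ = wt α β (glue (unglueL τ) (unglueR τ)) := by rw [hg]
      _ = _ := wt_glue α β _ _

end TASEP

namespace TASEP

lemma cnt_def {L : ℕ} (c : ℕ) (τ : Fin L → Fin 3) :
    (Finset.univ.filter (fun t : Fin L => (t : ℕ) < c ∧ τ t = 2)).card = cnt c τ := rfl

lemma chain_le (q : ℕ → ℕ) (m : ℕ) (hmono : ∀ i, 1 ≤ i → i < m → q i < q (i+1))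
    (i k : ℕ) (h1 : 1 ≤ i) (h2 : i ≤ k) (h3 : k ≤ m) : q i ≤ q k := by
  induction k with
  | zero => omega
  | succ k ih =>
    rcases Nat.eq_or_lt_of_le h2 with he | hl
    · rw [he]
    · have e1 : q i ≤ q k := ih (by omega) (by omega)
      have e2 : q k < q (k+1) := hmono k (by omega) (by omega)
      omega

lemma aux : ∀ (m : ℕ), 1 ≤ m → ∀ (α β : ℝ) (L n : ℕ) (j q : ℕ → ℕ),
    1 ≤ j 1 → (∀ i, 1 ≤ i → i < m → j i < j (i + 1)) → j m ≤ n →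
    1 ≤ q 1 → (∀ i, 1 ≤ i → i < m → q i < q (i + 1)) → q m ≤ L →
    (∑ τ ∈ (Y L n).filter (fun τ => ∀ i, 1 ≤ i → i ≤ m →
        ((Finset.univ.filter (fun t : Fin L => (t : ℕ) < q i ∧ τ t = 2)).card = j i ∧
          val τ (q i) = 2)), wt α β τ)
    = Z α 1 (q 1 - 1) (j 1 - 1) *
        (∏ i ∈ Finset.Icc 2 m, Z 1 1 (q i - q (i - 1) - 1) (j i - j (i - 1) - 1)) *
        Z 1 β (L - q m) (n - j m) := by
  intro m
  induction m with
  | zero => intro h; exact absurd h (by omega)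
  | succ m ih =>
    intro _ α β L n j q hj1 hjmono hjn hq1 hqmono hqL
    have hq1m : 1 ≤ q (m+1) := le_trans hq1 (chain_le q (m+1) hqmono 1 (m+1) le_rfl (by omega) le_rfl)
    have hj1m : 1 ≤ j (m+1) := le_trans hj1 (chain_le j (m+1) hjmono 1 (m+1) le_rfl (by omega) le_rfl)
    obtain ⟨a, b, ha, hb⟩ : ∃ a b, q (m+1) = a + 1 ∧ L = a + 1 + b :=
      ⟨q (m+1) - 1, L - q (m+1), by omega, by omega⟩
    subst hb
    obtain ⟨nl, nr, hn1, hn2⟩ : ∃ nl nr, j (m+1) = nl + 1 ∧ n = nl + 1 + nr :=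
      ⟨j (m+1) - 1, n - j (m+1), by omega, by omega⟩
    subst hn2
    -- the value of τ at site q (m+1)
    have hv : ∀ τ : Fin (a+1+b) → Fin 3, val τ (q (m+1)) = τ ⟨a, by omega⟩ := by
      intro τ
      rw [val_eq τ (q (m+1)) hq1m (by omega)]
      congr 1
      exact Fin.ext (show q (m+1) - 1 = a by omega)
    -- bound for the earlier marked sites
    have hqa : ∀ i, 1 ≤ i → i ≤ m → q i ≤ a := by
      intro i h1 h2
      have e1 : q i ≤ q m := chain_le q (m+1) hqmono i m h1 h2 (by omega)
      have e2 : q m < q (m+1) := hqmono m (by omega) (by omega)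
      omega
    have hqi1 : ∀ i, 1 ≤ i → i ≤ m → 1 ≤ q i := by
      intro i h1 h2
      exact le_trans hq1 (chain_le q (m+1) hqmono 1 i le_rfl h1 (by omega))
    -- rewrite the filter condition
    have hpred : ∀ τ : Fin (a+1+b) → Fin 3, τ ∈ Y (a+1+b) (nl+1+nr) →
        ((∀ i, 1 ≤ i → i ≤ m+1 → (cnt (q i) τ = j i ∧ val τ (q i) = 2)) ↔
         ((∀ i, 1 ≤ i → i ≤ m → (cnt (q i) τ = j i ∧ val τ (q i) = 2)) ∧
           cnt (a+1) τ = nl + 1 ∧ τ ⟨a, by omega⟩ = 2)) := by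
      intro τ _
      constructor
      · intro H
        refine ⟨fun i h1 h2 => H i h1 (by omega), ?_, ?_⟩
        · have e := (H (m+1) (by omega) le_rfl).1
          rwa [ha, hn1] at e
        · have e := (H (m+1) (by omega) le_rfl).2
          rwa [hv τ] at e
      · rintro ⟨H, hc, h2⟩ i h1 h2'
        rcases Nat.lt_or_ge i (m+1) with hi | hi
        · exact H i h1 (by omega)
        · have hi' : i = m+1 := by omega
          subst hi'
          refine ⟨by rwa [ha, hn1], by rwa [hv τ]⟩
    simp only [cnt_def]
    erw [Finset.filter_congr hpred]
    have hcompat : ∀ (σl : Fin a → Fin 3) (σr : Fin b → Fin 3),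
        (∀ i, 1 ≤ i → i ≤ m → (cnt (q i) (glue σl σr) = j i ∧ val (glue σl σr) (q i) = 2)) ↔
        (∀ i, 1 ≤ i → i ≤ m → (cnt (q i) σl = j i ∧ val σl (q i) = 2)) := by
      intro σl σr
      have key : ∀ i, 1 ≤ i → i ≤ m →
          (cnt (q i) (glue σl σr) = cnt (q i) σl ∧
            val (glue σl σr) (q i) = val σl (q i)) := by
        intro i h1 h2
        exact ⟨cnt_glue_le σl σr (q i) (hqa i h1 h2),
          val_glue_left σl σr (q i) (hqi1 i h1 h2) (hqa i h1 h2)⟩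
      constructor
      · intro H i h1 h2
        obtain ⟨k1, k2⟩ := key i h1 h2
        obtain ⟨w1, w2⟩ := H i h1 h2
        exact ⟨k1 ▸ w1, k2 ▸ w2⟩
      · intro H i h1 h2
        obtain ⟨k1, k2⟩ := key i h1 h2
        obtain ⟨w1, w2⟩ := H i h1 h2
        exact ⟨k1.trans w1, k2.trans w2⟩
    have hsplit := split_sum α β a b nl nr
      (fun τ => ∀ i, 1 ≤ i → i ≤ m → (cnt (q i) τ = j i ∧ val τ (q i) = 2))
      (fun σ => ∀ i, 1 ≤ i → i ≤ m → (cnt (q i) σ = j i ∧ val σ (q i) = 2)) hcompat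
    convert hsplit using 2
    · ext x
      simp only [Finset.mem_filter]
    · -- head factor
      rcases Nat.eq_zero_or_pos m with hm0 | hm1
      · subst hm0
        have ha1 : q 1 = a + 1 := by simpa using ha
        have hn1' : j 1 = nl + 1 := by simpa using hn1
        have e1 : q 1 - 1 = a := by omega
        have e2 : j 1 - 1 = nl := by omega
        calc Z α 1 (q 1 - 1) (j 1 - 1) *
              ∏ i ∈ Finset.Icc 2 (0+1), Z 1 1 (q i - q (i - 1) - 1) (j i - j (i - 1) - 1)
            = Z α 1 a nl := by
              rw [e1, e2, show Finset.Icc 2 (0+1) = ∅ from Finset.Icc_eq_empty (by omega),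
                Finset.prod_empty, mul_one]
          _ = ∑ σ ∈ Y a nl, wt α 1 σ := rfl
          _ = _ := by
              apply Finset.sum_congr _ (fun _ _ => rfl)
              ext x
              simp only [Finset.mem_filter]
              exact ⟨fun hx => ⟨hx, fun i h1 h2 => absurd (h1.trans h2) (by omega)⟩,
                fun hx => hx.1⟩
      · have hjm : j m < j (m+1) := hjmono m hm1 (by omega)
        have hqm : q m < q (m+1) := hqmono m hm1 (by omega)
        have ih' := ih hm1 α 1 a nl j q hj1
          (fun i h1 h2 => hjmono i h1 (by omega))
          (by omega)
          hq1 (fun i h1 h2 => hqmono i h1 (by omega)) (by omega)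
        simp only [cnt_def] at ih'
        calc Z α 1 (q 1 - 1) (j 1 - 1) *
              ∏ i ∈ Finset.Icc 2 (m+1), Z 1 1 (q i - q (i - 1) - 1) (j i - j (i - 1) - 1)
            = Z α 1 (q 1 - 1) (j 1 - 1) *
              (∏ i ∈ Finset.Icc 2 m, Z 1 1 (q i - q (i - 1) - 1) (j i - j (i - 1) - 1)) *
              Z 1 1 (a - q m) (nl - j m) := by
              rw [Finset.prod_Icc_succ_top (by omega : 2 ≤ m + 1)]
              have e1 : q (m+1) - q ((m+1) - 1) - 1 = a - q m := by
                simp only [Nat.add_sub_cancel]; omega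
              have e2 : j (m+1) - j ((m+1) - 1) - 1 = nl - j m := by
                simp only [Nat.add_sub_cancel]; omega
              rw [e1, e2]; ring
          _ = _ := by
              refine ih'.symm.trans ?_
              apply Finset.sum_congr _ (fun _ _ => rfl)
              ext x
              simp only [Finset.mem_filter]
              exact Finset.mem_filter
    · -- tail factor
      congr 1 <;> omega

end TASEP

namespace TASEP

/-- the sum of weights of configurations whose `jᵢ`-th second
class particle (counting from the left) sits at site `qᵢ`, for `i = 1,…,m`,
factorizes into a product of partition functions. Here `j, q : ℕ → ℕ` are
used with 1-based indices `1,…,m`. -/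
theorem second_class_particle_positions_factorize (α β : ℝ)
    (hα : α ∈ Set.Ioc (0 : ℝ) 1) (hβ : β ∈ Set.Ioc (0 : ℝ) 1)
    (L n m : ℕ) (h0n : 0 < n) (hnL : n < L) (hm : 1 ≤ m)
    (j q : ℕ → ℕ)
    (hj1 : 1 ≤ j 1) (hjmono : ∀ i, 1 ≤ i → i < m → j i < j (i + 1)) (hjn : j m ≤ n)
    (hq1 : 1 ≤ q 1) (hqmono : ∀ i, 1 ≤ i → i < m → q i < q (i + 1)) (hqL : q m ≤ L) :
    ∑ τ ∈ (Y L n).filter (fun τ => ∀ i, 1 ≤ i → i ≤ m →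
        ((Finset.univ.filter (fun t : Fin L => (t : ℕ) < q i ∧ τ t = 2)).card = j i ∧
          val τ (q i) = 2)),
      wt α β τ
    = Z α 1 (q 1 - 1) (j 1 - 1) *
        (∏ i ∈ Finset.Icc 2 m, Z 1 1 (q i - q (i - 1) - 1) (j i - j (i - 1) - 1)) *
        Z 1 β (L - q m) (n - j m) := by
  exact aux m hm α β L n j q hj1 hjmono hjn hq1 hqmono hqL

end TASEP
end
end
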